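/- (Estimate with first derivative) Let f : [0,1] → ℝ be continuously differentiable. Then for every n ≥ 2, 0 ≤ α ≤ 1, ρ > 0, δ > 0 and x ∈ [0,1], |G_{n,ρ}^{(α)}(f; x) − f(x)| ≤ |f'(x)| · |1−2x|/(nρ+2) + ω(f', δ) (1 + τ(x)^{1/2}/δ) τ(x)^{1/2}, where τ(x) = G_{n,ρ}^{(α)}((t−x)²; x) and ω(f',δ) = sup{|f'(u)−f'(v)| : u,v ∈ [0,1], |u−v| ≤ δ} is the modulus of continuity of f'. In particular, with δ = √τ(x), |G_{n,ρ}^{(α)}(f;x) − f(x)| ≤ |f'(x)||1−2x|/(nρ+2) + 2√(τ(x)) ω(f', √(τ(x))). -/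

import Mathlib

open MeasureTheory Filter Finset Real

/-- Generalized Bernstein basis function `p_{n,k}^{(α)}(x)` (polynomial form). -/
noncomputable def bernP (n k : ℕ) (α x : ℝ) : ℝ :=
  ((n - 2).choose k : ℝ) * (1 - α) * x ^ k * (1 - x) ^ (n - k - 1)
    + (if 2 ≤ k then (((n - 2).choose (k - 2)) : ℝ) else 0) * (1 - α) * x ^ (k - 1) * (1 - x) ^ (n - k)
    + (n.choose k : ℝ) * α * x ^ k * (1 - x) ^ (n - k)

/-- Euler Beta function. -/
noncomputable def betaR (e f : ℝ) : ℝ := Real.Gamma e * Real.Gamma f / Real.Gamma (e + f)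

/-- The Beta density `μ_{n,ρ,k}`. -/
noncomputable def muD (n k : ℕ) (ρ t : ℝ) : ℝ :=
  t ^ ((k : ℝ) * ρ) * (1 - t) ^ (((n : ℝ) - (k : ℝ)) * ρ) /
    betaR ((k : ℝ) * ρ + 1) (((n : ℝ) - (k : ℝ)) * ρ + 1)

/-- The generalized Bernstein–Durrmeyer operator. -/
noncomputable def G (n : ℕ) (α ρ : ℝ) (f : ℝ → ℝ) (x : ℝ) : ℝ :=
  ∑ k ∈ Finset.range (n + 1), bernP n k α x * ∫ t in (0:ℝ)..1, muD n k ρ t * f t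

/-! ### Beta function facts -/

lemma betaR_pos {a b : ℝ} (ha : 0 < a) (hb : 0 < b) : 0 < betaR a b := by
  unfold betaR
  exact div_pos (mul_pos (Real.Gamma_pos_of_pos ha) (Real.Gamma_pos_of_pos hb))
    (Real.Gamma_pos_of_pos (by linarith))

lemma betaInt {a b : ℝ} (ha : 0 < a) (hb : 0 < b) :
    ∫ t in (0:ℝ)..1, t ^ (a - 1) * (1 - t) ^ (b - 1) = betaR a b := by
  have h := Complex.Gamma_mul_Gamma_eq_betaIntegral (s := (a:ℂ)) (t := (b:ℂ))
    (by simpa using ha) (by simpa using hb)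
  have hB : Complex.betaIntegral a b =
      ((∫ t in (0:ℝ)..1, t ^ (a - 1) * (1 - t) ^ (b - 1) : ℝ) : ℂ) := by
    rw [Complex.betaIntegral, ← intervalIntegral.integral_ofReal]
    apply intervalIntegral.integral_congr
    intro t ht
    rw [Set.uIcc_of_le (by norm_num : (0:ℝ) ≤ 1)] at ht
    have h1 : ((t:ℂ)) ^ ((a:ℂ) - 1) = ((t ^ (a - 1) : ℝ) : ℂ) := by
      rw [Complex.ofReal_cpow ht.1]; push_cast; ring_nf
    have h2 : (1 - (t:ℂ)) ^ ((b:ℂ) - 1) = (((1 - t) ^ (b - 1) : ℝ) : ℂ) := by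
      rw [show (1 - (t:ℂ)) = (((1 - t : ℝ)):ℂ) by push_cast; ring,
        Complex.ofReal_cpow (by linarith [ht.2])]
      push_cast; ring_nf
    simp [h1, h2]
  have hne : Complex.Gamma ((a:ℂ) + b) ≠ 0 := by
    rw [show ((a:ℂ) + b) = ((a + b : ℝ) : ℂ) by push_cast; ring, Complex.Gamma_ofReal]
    exact_mod_cast (Real.Gamma_pos_of_pos (by linarith)).ne'
  rw [hB] at h
  have : ((Real.Gamma a * Real.Gamma b : ℝ) : ℂ)
      = ((Real.Gamma (a+b) * (∫ t in (0:ℝ)..1, t ^ (a - 1) * (1 - t) ^ (b - 1)) : ℝ) : ℂ) := by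
    push_cast
    rw [← Complex.Gamma_ofReal, ← Complex.Gamma_ofReal, ← Complex.Gamma_ofReal] at *
    convert h using 2 <;> push_cast <;> ring
  have h2 := Complex.ofReal_inj.mp this
  unfold betaR
  rw [h2]
  field_simp [(Real.Gamma_pos_of_pos (show (0:ℝ) < a + b by linarith)).ne']

lemma betaR_succ {a b : ℝ} (ha : 0 < a) (hb : 0 < b) :
    betaR (a + 1) b = a / (a + b) * betaR a b := by
  unfold betaR
  rw [Real.Gamma_add_one ha.ne', show a + 1 + b = (a + b) + 1 by ring,
    Real.Gamma_add_one (by positivity)]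
  have g1 := (Real.Gamma_pos_of_pos ha).ne'
  have g2 := (Real.Gamma_pos_of_pos hb).ne'
  have g3 := (Real.Gamma_pos_of_pos (show (0:ℝ) < a + b by linarith)).ne'
  field_simp

/-! ### Beta density facts -/

lemma rpow_cont {c : ℝ} (hc : 0 ≤ c) : Continuous (fun t : ℝ => t ^ c) :=
  continuous_iff_continuousAt.mpr fun x => Real.continuousAt_rpow_const x c (Or.inr hc)

lemma muD_cont {n k : ℕ} {ρ : ℝ} (hk : k ≤ n) (hρ : 0 < ρ) : Continuous (muD n k ρ) := by
  have h1 : (0:ℝ) ≤ (k:ℝ) * ρ := mul_nonneg (by positivity) hρ.le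
  have h2 : (0:ℝ) ≤ ((n:ℝ) - (k:ℝ)) * ρ :=
    mul_nonneg (by simp only [sub_nonneg]; exact_mod_cast hk) hρ.le
  unfold muD
  exact (((rpow_cont h1)).mul ((rpow_cont h2).comp (continuous_const.sub continuous_id))).div_const _

lemma muD_nonneg {n k : ℕ} {ρ : ℝ} (hk : k ≤ n) (hρ : 0 < ρ) {t : ℝ} (ht : t ∈ Set.Icc (0:ℝ) 1) :
    0 ≤ muD n k ρ t := by
  have h1 : (0:ℝ) < (k:ℝ) * ρ + 1 := by positivity
  have h2 : (0:ℝ) < ((n:ℝ) - (k:ℝ)) * ρ + 1 := by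
    have : (0:ℝ) ≤ ((n:ℝ) - (k:ℝ)) * ρ :=
      mul_nonneg (by simp only [sub_nonneg]; exact_mod_cast hk) hρ.le
    linarith
  exact div_nonneg (mul_nonneg (Real.rpow_nonneg ht.1 _)
    (Real.rpow_nonneg (by linarith [ht.2]) _)) (betaR_pos h1 h2).le

lemma muD_int_one {n k : ℕ} {ρ : ℝ} (hk : k ≤ n) (hρ : 0 < ρ) :
    ∫ t in (0:ℝ)..1, muD n k ρ t = 1 := by
  have h1 : (0:ℝ) < (k:ℝ) * ρ + 1 := by positivity
  have h2 : (0:ℝ) < ((n:ℝ) - (k:ℝ)) * ρ + 1 := by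
    have : (0:ℝ) ≤ ((n:ℝ) - (k:ℝ)) * ρ :=
      mul_nonneg (by simp only [sub_nonneg]; exact_mod_cast hk) hρ.le
    linarith
  unfold muD
  rw [intervalIntegral.integral_div]
  have : ∫ t in (0:ℝ)..1, t ^ ((k:ℝ)*ρ) * (1-t) ^ (((n:ℝ)-(k:ℝ))*ρ)
      = betaR ((k:ℝ)*ρ + 1) (((n:ℝ)-(k:ℝ))*ρ + 1) := by
    rw [← betaInt h1 h2]
    apply intervalIntegral.integral_congr
    intro t _
    norm_num
  rw [this, div_self (betaR_pos h1 h2).ne']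

lemma muD_int_id {n k : ℕ} {ρ : ℝ} (hk : k ≤ n) (hρ : 0 < ρ) :
    ∫ t in (0:ℝ)..1, muD n k ρ t * t = ((k:ℝ)*ρ + 1) / ((n:ℝ)*ρ + 2) := by
  have h1 : (0:ℝ) < (k:ℝ) * ρ + 1 := by positivity
  have h2 : (0:ℝ) < ((n:ℝ) - (k:ℝ)) * ρ + 1 := by
    have : (0:ℝ) ≤ ((n:ℝ) - (k:ℝ)) * ρ :=
      mul_nonneg (by simp only [sub_nonneg]; exact_mod_cast hk) hρ.le
    linarith
  have key : ∫ t in (0:ℝ)..1, muD n k ρ t * t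
      = (∫ t in (0:ℝ)..1, t ^ (((k:ℝ)*ρ + 2) - 1) * (1-t) ^ ((((n:ℝ)-(k:ℝ))*ρ + 1) - 1))
          / betaR ((k:ℝ)*ρ + 1) (((n:ℝ)-(k:ℝ))*ρ + 1) := by
    rw [← intervalIntegral.integral_div]
    apply intervalIntegral.integral_congr
    intro t ht
    rw [Set.uIcc_of_le (by norm_num : (0:ℝ) ≤ 1)] at ht
    unfold muD
    dsimp only
    rcases eq_or_ne t 0 with rfl | htne
    · rw [Real.zero_rpow (by linarith : (k:ℝ)*ρ + 2 - 1 ≠ 0)]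
      ring
    · rw [show ((k:ℝ)*ρ + 2 - 1) = (k:ℝ)*ρ + 1 by ring, Real.rpow_add_one htne]
      ring_nf
  rw [key, betaInt (by linarith) h2, show ((k:ℝ)*ρ + 2) = ((k:ℝ)*ρ + 1) + 1 by ring,
    betaR_succ h1 h2, show ((k:ℝ)*ρ + 1) + (((n:ℝ)-(k:ℝ))*ρ + 1) = (n:ℝ)*ρ + 2 by ring,
    mul_div_assoc, div_self (betaR_pos h1 h2).ne', mul_one]

/-! ### Bernstein basis sums -/

lemma sumB (m : ℕ) (x : ℝ) :
    ∑ k ∈ Finset.range (m+1), (m.choose k : ℝ) * x^k * (1-x)^(m-k) = 1 := by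
  have h := congrArg (Polynomial.eval x) (bernsteinPolynomial.sum ℝ m)
  simp only [bernsteinPolynomial, Polynomial.eval_finset_sum, Polynomial.eval_mul,
    Polynomial.eval_pow, Polynomial.eval_sub, Polynomial.eval_one, Polynomial.eval_X,
    Polynomial.eval_natCast, nsmul_eq_mul] at h
  simpa using h

lemma sumKB (m : ℕ) (x : ℝ) :
    ∑ k ∈ Finset.range (m+1), (k:ℝ) * ((m.choose k : ℝ) * x^k * (1-x)^(m-k)) = m * x := by
  have h := congrArg (Polynomial.eval x) (bernsteinPolynomial.sum_smul ℝ m)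
  simp only [bernsteinPolynomial, Polynomial.eval_finset_sum, Polynomial.eval_mul,
    Polynomial.eval_pow, Polynomial.eval_sub, Polynomial.eval_one, Polynomial.eval_X,
    Polynomial.eval_natCast, nsmul_eq_mul, smul_eq_mul, Polynomial.eval_smul] at h
  rw [← h]

lemma bernP_nonneg {n k : ℕ} {α x : ℝ} (hα : α ∈ Set.Icc (0:ℝ) 1) (hx : x ∈ Set.Icc (0:ℝ) 1) :
    0 ≤ bernP n k α x := by
  obtain ⟨h1, h2⟩ := hα; obtain ⟨h3, h4⟩ := hx
  have e1 : (0:ℝ) ≤ 1 - α := by linarith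
  have e2 : (0:ℝ) ≤ 1 - x := by linarith
  unfold bernP
  have : (0:ℝ) ≤ (if 2 ≤ k then (((n - 2).choose (k - 2)) : ℝ) else 0) := by positivity
  positivity

lemma sum_bernP {n : ℕ} (hn : 2 ≤ n) (α x : ℝ) :
    ∑ k ∈ Finset.range (n+1), bernP n k α x = 1 := by
  unfold bernP
  rw [Finset.sum_add_distrib, Finset.sum_add_distrib]
  have S1 : ∑ k ∈ Finset.range (n+1), ((n-2).choose k : ℝ) * (1-α) * x^k * (1-x)^(n-k-1)
      = (1-α) * (1-x) := by
    rw [← Finset.sum_subset (Finset.range_subset_range.mpr (show n-1 ≤ n+1 by omega))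
      (by intro k hk1 hk2
          rw [Finset.mem_range] at hk1 hk2
          rw [Nat.choose_eq_zero_of_lt (by omega)]
          simp)]
    rw [Finset.sum_congr rfl (fun k hk => by
        rw [Finset.mem_range] at hk
        rw [show n-k-1 = (n-2-k)+1 by omega]
        ring)
      (g := fun k : ℕ => ((1-α) * (1-x)) * (((n-2).choose k : ℝ) * x^k * (1-x)^(n-2-k)))]
    · rw [← Finset.mul_sum, show n-1 = (n-2)+1 by omega, sumB, mul_one]
  have S2 : ∑ k ∈ Finset.range (n+1),
      (if 2 ≤ k then (((n-2).choose (k-2)) : ℝ) else 0) * (1-α) * x^(k-1) * (1-x)^(n-k)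
      = (1-α) * x := by
    rw [show n+1 = (n-1)+1+1 by omega, Finset.sum_range_succ', Finset.sum_range_succ']
    simp only [show ¬ (2 ≤ 1) by norm_num, show ¬ (2 ≤ 0) by norm_num, if_false,
      zero_mul, add_zero]
    rw [Finset.sum_congr rfl (fun j hj => by
        rw [if_pos (by omega : 2 ≤ j+1+1), show j+1+1-2 = j by omega, show j+1+1-1 = j+1 by omega,
          show n-(j+1+1) = (n-2)-j by omega, pow_succ']
        ring)
      (g := fun j : ℕ => ((1-α) * x) * (((n-2).choose j : ℝ) * x^j * (1-x)^(n-2-j)))]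
    rw [← Finset.mul_sum, show n-1 = (n-2)+1 by omega, sumB, mul_one]
  have S3 : ∑ k ∈ Finset.range (n+1), (n.choose k : ℝ) * α * x^k * (1-x)^(n-k) = α := by
    rw [Finset.sum_congr rfl (fun k hk => by ring)
      (g := fun k : ℕ => α * ((n.choose k : ℝ) * x^k * (1-x)^(n-k)))]
    rw [← Finset.mul_sum, sumB, mul_one]
  rw [S1, S2, S3]; ring

lemma sum_k_bernP {n : ℕ} (hn : 2 ≤ n) (α x : ℝ) :
    ∑ k ∈ Finset.range (n+1), (k:ℝ) * bernP n k α x = n * x := by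
  unfold bernP
  rw [Finset.sum_congr rfl (fun k hk => by ring)
    (g := fun k : ℕ => (k:ℝ) * (((n-2).choose k : ℝ) * (1-α) * x^k * (1-x)^(n-k-1))
      + (k:ℝ) * ((if 2 ≤ k then (((n-2).choose (k-2)) : ℝ) else 0) * (1-α) * x^(k-1) * (1-x)^(n-k))
      + (k:ℝ) * ((n.choose k : ℝ) * α * x^k * (1-x)^(n-k)))]
  rw [Finset.sum_add_distrib, Finset.sum_add_distrib]
  have S1 : ∑ k ∈ Finset.range (n+1), (k:ℝ) * (((n-2).choose k : ℝ) * (1-α) * x^k * (1-x)^(n-k-1))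
      = (1-α) * (1-x) * (((n:ℝ)-2) * x) := by
    rw [← Finset.sum_subset (Finset.range_subset_range.mpr (show n-1 ≤ n+1 by omega))
      (by intro k hk1 hk2
          rw [Finset.mem_range] at hk1 hk2
          rw [Nat.choose_eq_zero_of_lt (by omega)]
          simp)]
    rw [Finset.sum_congr rfl (fun k hk => by
        rw [Finset.mem_range] at hk
        rw [show n-k-1 = (n-2-k)+1 by omega]
        ring)
      (g := fun k : ℕ => ((1-α) * (1-x)) * ((k:ℝ) * (((n-2).choose k : ℝ) * x^k * (1-x)^(n-2-k))))]
    rw [← Finset.mul_sum, show n-1 = (n-2)+1 by omega, sumKB]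
    rw [Nat.cast_sub hn]
    push_cast
    ring
  have S2 : ∑ k ∈ Finset.range (n+1),
      (k:ℝ) * ((if 2 ≤ k then (((n-2).choose (k-2)) : ℝ) else 0) * (1-α) * x^(k-1) * (1-x)^(n-k))
      = (1-α) * x * (((n:ℝ)-2) * x + 2) := by
    rw [show n+1 = (n-1)+1+1 by omega, Finset.sum_range_succ', Finset.sum_range_succ']
    simp only [show ¬ (2 ≤ 1) by norm_num, show ¬ (2 ≤ 0) by norm_num, if_false,
      zero_mul, mul_zero, add_zero]
    rw [Finset.sum_congr rfl (fun j hj => by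
        rw [if_pos (by omega : 2 ≤ j+1+1), show j+1+1-2 = j by omega, show j+1+1-1 = j+1 by omega,
          show n-(j+1+1) = (n-2)-j by omega, pow_succ']
        push_cast
        ring)
      (g := fun j : ℕ => ((1-α) * x) * ((j:ℝ) * (((n-2).choose j : ℝ) * x^j * (1-x)^(n-2-j)))
        + ((1-α) * x * 2) * (((n-2).choose j : ℝ) * x^j * (1-x)^(n-2-j)))]
    rw [Finset.sum_add_distrib, ← Finset.mul_sum, ← Finset.mul_sum,
      show n-1 = (n-2)+1 by omega, sumKB, sumB, Nat.cast_sub hn]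
    push_cast
    ring
  have S3 : ∑ k ∈ Finset.range (n+1), (k:ℝ) * ((n.choose k : ℝ) * α * x^k * (1-x)^(n-k))
      = α * ((n:ℝ) * x) := by
    rw [Finset.sum_congr rfl (fun k hk => by ring)
      (g := fun k : ℕ => α * ((k:ℝ) * ((n.choose k : ℝ) * x^k * (1-x)^(n-k))))]
    rw [← Finset.mul_sum, sumKB]
  rw [S1, S2, S3]; ring

/-! ### Operator lemmas -/

lemma muD_integrable {n k : ℕ} {ρ : ℝ} (hk : k ≤ n) (hρ : 0 < ρ) {g : ℝ → ℝ}
    (hg : ContinuousOn g (Set.Icc (0:ℝ) 1)) :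
    IntervalIntegrable (fun t => muD n k ρ t * g t) volume 0 1 := by
  apply ContinuousOn.intervalIntegrable
  rw [Set.uIcc_of_le (by norm_num : (0:ℝ) ≤ 1)]
  exact ((muD_cont hk hρ).continuousOn).mul hg

lemma G_const {n : ℕ} {α ρ x : ℝ} (hn : 2 ≤ n) (hρ : 0 < ρ) (c : ℝ) :
    G n α ρ (fun _ => c) x = c := by
  unfold G
  have : ∀ k ∈ Finset.range (n+1), bernP n k α x * ∫ t in (0:ℝ)..1, muD n k ρ t * c
      = bernP n k α x * c := by
    intro k hk
    rw [Finset.mem_range] at hk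
    rw [intervalIntegral.integral_mul_const, muD_int_one (by omega) hρ, one_mul]
  rw [Finset.sum_congr rfl this, ← Finset.sum_mul, sum_bernP hn, one_mul]

lemma G_add {n : ℕ} {α ρ x : ℝ} (hn : 2 ≤ n) (hρ : 0 < ρ) {g h : ℝ → ℝ}
    (hg : ContinuousOn g (Set.Icc (0:ℝ) 1)) (hh : ContinuousOn h (Set.Icc (0:ℝ) 1)) :
    G n α ρ (fun t => g t + h t) x = G n α ρ g x + G n α ρ h x := by
  unfold G
  rw [← Finset.sum_add_distrib]
  apply Finset.sum_congr rfl
  intro k hk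
  rw [Finset.mem_range] at hk
  have : ∫ t in (0:ℝ)..1, muD n k ρ t * (g t + h t)
      = (∫ t in (0:ℝ)..1, muD n k ρ t * g t) + ∫ t in (0:ℝ)..1, muD n k ρ t * h t := by
    rw [← intervalIntegral.integral_add (muD_integrable (by omega) hρ hg)
      (muD_integrable (by omega) hρ hh)]
    apply intervalIntegral.integral_congr
    intro t _
    ring
  rw [this]
  ring

lemma G_smul {n : ℕ} {α ρ x : ℝ} {g : ℝ → ℝ} (c : ℝ) :
    G n α ρ (fun t => c * g t) x = c * G n α ρ g x := by
  unfold G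
  rw [Finset.mul_sum]
  apply Finset.sum_congr rfl
  intro k hk
  have : ∫ t in (0:ℝ)..1, muD n k ρ t * (c * g t)
      = c * ∫ t in (0:ℝ)..1, muD n k ρ t * g t := by
    rw [← intervalIntegral.integral_const_mul]
    apply intervalIntegral.integral_congr
    intro t _
    ring
  rw [this]
  ring

lemma G_mono {n : ℕ} {α ρ x : ℝ} (hn : 2 ≤ n) (hρ : 0 < ρ) (hα : α ∈ Set.Icc (0:ℝ) 1)
    (hx : x ∈ Set.Icc (0:ℝ) 1) {g h : ℝ → ℝ} (hg : ContinuousOn g (Set.Icc (0:ℝ) 1))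
    (hh : ContinuousOn h (Set.Icc (0:ℝ) 1))
    (hle : ∀ t ∈ Set.Icc (0:ℝ) 1, g t ≤ h t) :
    G n α ρ g x ≤ G n α ρ h x := by
  unfold G
  apply Finset.sum_le_sum
  intro k hk
  rw [Finset.mem_range] at hk
  apply mul_le_mul_of_nonneg_left _ (bernP_nonneg hα hx)
  apply intervalIntegral.integral_mono_on (by norm_num)
    (muD_integrable (by omega) hρ hg) (muD_integrable (by omega) hρ hh)
  intro t ht
  exact mul_le_mul_of_nonneg_left (hle t ht) (muD_nonneg (by omega) hρ ht)

lemma G_lin {n : ℕ} {α ρ x : ℝ} (hn : 2 ≤ n) (hρ : 0 < ρ) :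
    G n α ρ (fun t => t - x) x = (1 - 2*x) / ((n:ℝ)*ρ + 2) := by
  have hden : (0:ℝ) < (n:ℝ)*ρ + 2 := by positivity
  unfold G
  have : ∀ k ∈ Finset.range (n+1), bernP n k α x * ∫ t in (0:ℝ)..1, muD n k ρ t * (t - x)
      = bernP n k α x * (((k:ℝ)*ρ + 1) / ((n:ℝ)*ρ + 2) - x) := by
    intro k hk
    rw [Finset.mem_range] at hk
    congr 1
    have i1 : IntervalIntegrable (fun t => muD n k ρ t * t) volume 0 1 :=
      muD_integrable (by omega) hρ (continuous_id.continuousOn)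
    have i2 : IntervalIntegrable (fun t => muD n k ρ t * x) volume 0 1 :=
      muD_integrable (by omega) hρ (continuous_const.continuousOn)
    have e0 : ∫ t in (0:ℝ)..1, muD n k ρ t * (t - x)
        = ∫ t in (0:ℝ)..1, (muD n k ρ t * t - muD n k ρ t * x) := by
      apply intervalIntegral.integral_congr
      intro t _
      ring
    rw [e0, intervalIntegral.integral_sub i1 i2, intervalIntegral.integral_mul_const,
      muD_int_id (by omega) hρ, muD_int_one (by omega) hρ, one_mul]
  rw [Finset.sum_congr rfl this]
  have expand : ∀ k ∈ Finset.range (n+1),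
      bernP n k α x * (((k:ℝ)*ρ + 1) / ((n:ℝ)*ρ + 2) - x)
      = (ρ / ((n:ℝ)*ρ + 2)) * ((k:ℝ) * bernP n k α x)
        + (1 / ((n:ℝ)*ρ + 2) - x) * bernP n k α x := by
    intro k hk
    field_simp
    ring
  rw [Finset.sum_congr rfl expand, Finset.sum_add_distrib, ← Finset.mul_sum, ← Finset.mul_sum,
    sum_k_bernP hn, sum_bernP hn]
  field_simp
  ring

lemma G_abs {n : ℕ} {α ρ x : ℝ} (hn : 2 ≤ n) (hρ : 0 < ρ) (hα : α ∈ Set.Icc (0:ℝ) 1)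
    (hx : x ∈ Set.Icc (0:ℝ) 1) {g : ℝ → ℝ} (hg : ContinuousOn g (Set.Icc (0:ℝ) 1)) :
    |G n α ρ g x| ≤ G n α ρ (fun t => |g t|) x := by
  unfold G
  calc |∑ k ∈ Finset.range (n+1), bernP n k α x * ∫ t in (0:ℝ)..1, muD n k ρ t * g t|
      ≤ ∑ k ∈ Finset.range (n+1), |bernP n k α x * ∫ t in (0:ℝ)..1, muD n k ρ t * g t| :=
        Finset.abs_sum_le_sum_abs _ _
    _ ≤ ∑ k ∈ Finset.range (n+1), bernP n k α x * ∫ t in (0:ℝ)..1, muD n k ρ t * |g t| := by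
        apply Finset.sum_le_sum
        intro k hk
        rw [Finset.mem_range] at hk
        rw [abs_mul, abs_of_nonneg (bernP_nonneg hα hx)]
        apply mul_le_mul_of_nonneg_left _ (bernP_nonneg hα hx)
        calc |∫ t in (0:ℝ)..1, muD n k ρ t * g t|
            ≤ ∫ t in (0:ℝ)..1, |muD n k ρ t * g t| :=
              intervalIntegral.abs_integral_le_integral_abs (by norm_num)
          _ = ∫ t in (0:ℝ)..1, muD n k ρ t * |g t| := by
              apply intervalIntegral.integral_congr
              intro t ht
              rw [Set.uIcc_of_le (by norm_num : (0:ℝ) ≤ 1)] at ht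
              dsimp only
              rw [abs_mul, abs_of_nonneg (muD_nonneg (by omega) hρ ht)]

/-! ### Modulus of continuity -/

lemma wset_zero_mem {g : ℝ → ℝ} {δ : ℝ} (hδ : 0 ≤ δ) :
    (0:ℝ) ∈ {y : ℝ | ∃ u ∈ Set.Icc (0:ℝ) 1, ∃ v ∈ Set.Icc (0:ℝ) 1, |u - v| ≤ δ ∧ y = |g u - g v|} :=
  ⟨0, by norm_num, 0, by norm_num, by simpa using hδ, by simp⟩

lemma wset_bdd {g : ℝ → ℝ} {δ : ℝ} (hg : ContinuousOn g (Set.Icc (0:ℝ) 1)) :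
    BddAbove {y : ℝ | ∃ u ∈ Set.Icc (0:ℝ) 1, ∃ v ∈ Set.Icc (0:ℝ) 1,
      |u - v| ≤ δ ∧ y = |g u - g v|} := by
  obtain ⟨C, hC⟩ := (isCompact_Icc).exists_bound_of_continuousOn hg
  refine ⟨2 * C, ?_⟩
  rintro y ⟨u, hu, v, hv, -, rfl⟩
  calc |g u - g v| ≤ ‖g u‖ + ‖g v‖ := by
        simpa using norm_sub_le (g u) (g v)
    _ ≤ 2 * C := by have := hC u hu; have := hC v hv; linarith

lemma w_nonneg {g : ℝ → ℝ} {δ : ℝ} (hg : ContinuousOn g (Set.Icc (0:ℝ) 1)) (hδ : 0 ≤ δ) :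
    0 ≤ sSup {y : ℝ | ∃ u ∈ Set.Icc (0:ℝ) 1, ∃ v ∈ Set.Icc (0:ℝ) 1,
      |u - v| ≤ δ ∧ y = |g u - g v|} :=
  le_csSup (wset_bdd hg) (wset_zero_mem hδ)

lemma w_le {g : ℝ → ℝ} {δ u v : ℝ} (hg : ContinuousOn g (Set.Icc (0:ℝ) 1))
    (hu : u ∈ Set.Icc (0:ℝ) 1) (hv : v ∈ Set.Icc (0:ℝ) 1) (huv : |u - v| ≤ δ) :
    |g u - g v| ≤ sSup {y : ℝ | ∃ u ∈ Set.Icc (0:ℝ) 1, ∃ v ∈ Set.Icc (0:ℝ) 1,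
      |u - v| ≤ δ ∧ y = |g u - g v|} :=
  le_csSup (wset_bdd hg) ⟨u, hu, v, hv, huv, rfl⟩

lemma w_chain {g : ℝ → ℝ} {δ : ℝ} (hg : ContinuousOn g (Set.Icc (0:ℝ) 1)) (hδ : 0 < δ)
    {u v : ℝ} (hu : u ∈ Set.Icc (0:ℝ) 1) (hv : v ∈ Set.Icc (0:ℝ) 1) :
    |g u - g v| ≤ (sSup {y : ℝ | ∃ u ∈ Set.Icc (0:ℝ) 1, ∃ v ∈ Set.Icc (0:ℝ) 1,
      |u - v| ≤ δ ∧ y = |g u - g v|}) * (1 + |u - v| / δ) := by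
  set W := sSup {y : ℝ | ∃ u ∈ Set.Icc (0:ℝ) 1, ∃ v ∈ Set.Icc (0:ℝ) 1,
    |u - v| ≤ δ ∧ y = |g u - g v|} with hW
  have hW0 : 0 ≤ W := w_nonneg hg hδ.le
  rcases eq_or_ne u v with rfl | hne
  · simp only [sub_self, abs_zero]
    positivity
  have hr : 0 < |u - v| := abs_pos.mpr (sub_ne_zero.mpr hne)
  set N : ℕ := ⌈|u - v| / δ⌉₊ with hN
  have hN1 : 1 ≤ N := Nat.one_le_ceil_iff.mpr (by positivity)
  have hNr : (0:ℝ) < N := by exact_mod_cast hN1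
  set p : ℕ → ℝ := fun i => v + (i:ℝ)/(N:ℝ) * (u - v) with hp
  have hp0 : p 0 = v := by simp [hp]
  have hpN : p N = u := by
    simp only [hp]
    rw [div_self hNr.ne']
    ring
  have hpmem : ∀ i, i ≤ N → p i ∈ Set.Icc (0:ℝ) 1 := by
    intro i hi
    have hc1 : (0:ℝ) ≤ (i:ℝ)/(N:ℝ) := by positivity
    have hc2 : (i:ℝ)/(N:ℝ) ≤ 1 := by
      rw [div_le_one hNr]
      exact_mod_cast hi
    obtain ⟨hu1, hu2⟩ := hu; obtain ⟨hv1, hv2⟩ := hv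
    constructor
    · simp only [hp]; nlinarith
    · simp only [hp]; nlinarith
  have hstep : ∀ i, i < N → |g (p (i+1)) - g (p i)| ≤ W := by
    intro i hi
    apply w_le hg (hpmem _ (by omega)) (hpmem _ (by omega))
    have hd : p (i+1) - p i = (u - v) / (N:ℝ) := by
      simp only [hp]
      push_cast
      field_simp
      ring
    rw [hd, abs_div, abs_of_pos hNr, div_le_iff₀ hNr]
    calc |u - v| ≤ (|u - v| / δ) * δ := by rw [div_mul_cancel₀]; exact hδ.ne'
      _ ≤ (N:ℝ) * δ := mul_le_mul_of_nonneg_right (Nat.le_ceil _) hδ.le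
      _ = δ * N := by ring
  have tele : g u - g v = ∑ i ∈ Finset.range N, (g (p (i+1)) - g (p i)) := by
    rw [Finset.sum_range_sub (fun i => g (p i)), hp0, hpN]
  calc |g u - g v| ≤ ∑ i ∈ Finset.range N, |g (p (i+1)) - g (p i)| := by
        rw [tele]; exact Finset.abs_sum_le_sum_abs _ _
    _ ≤ ∑ i ∈ Finset.range N, W := Finset.sum_le_sum (fun i hi =>
        hstep i (Finset.mem_range.mp hi))
    _ = (N:ℝ) * W := by rw [Finset.sum_const, Finset.card_range, nsmul_eq_mul]
    _ ≤ (1 + |u - v| / δ) * W := by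
        apply mul_le_mul_of_nonneg_right _ hW0
        have := Nat.ceil_lt_add_one (show (0:ℝ) ≤ |u - v| / δ by positivity)
        rw [hN]
        push_cast
        linarith
    _ = W * (1 + |u - v| / δ) := by ring

/-! ### Taylor remainder bound -/

lemma taylor_bound {f f' : ℝ → ℝ}
    (hf : ∀ y ∈ Set.Icc (0:ℝ) 1, HasDerivAt f (f' y) y)
    (hf' : ContinuousOn f' (Set.Icc (0:ℝ) 1))
    {x t δ : ℝ} (hx : x ∈ Set.Icc (0:ℝ) 1) (ht : t ∈ Set.Icc (0:ℝ) 1) (hδ : 0 < δ) :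
    |f t - f x - f' x * (t - x)| ≤ (sSup {y : ℝ | ∃ u ∈ Set.Icc (0:ℝ) 1,
      ∃ v ∈ Set.Icc (0:ℝ) 1, |u - v| ≤ δ ∧ y = |f' u - f' v|})
      * (|t - x| + (t - x)^2 / δ) := by
  set W := sSup {y : ℝ | ∃ u ∈ Set.Icc (0:ℝ) 1, ∃ v ∈ Set.Icc (0:ℝ) 1,
    |u - v| ≤ δ ∧ y = |f' u - f' v|} with hWdef
  have hW0 : 0 ≤ W := w_nonneg hf' hδ.le
  have hsub : Set.uIcc x t ⊆ Set.Icc (0:ℝ) 1 := Set.uIcc_subset_Icc hx ht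
  have hint : IntervalIntegrable f' volume x t :=
    (hf'.mono hsub).intervalIntegrable
  have hftc : ∫ u in x..t, f' u = f t - f x :=
    intervalIntegral.integral_eq_sub_of_hasDerivAt (fun u hu => hf u (hsub hu)) hint
  have hrem : ∫ u in x..t, (f' u - f' x) = f t - f x - f' x * (t - x) := by
    rw [intervalIntegral.integral_sub hint intervalIntegrable_const, hftc,
      intervalIntegral.integral_const, smul_eq_mul]
    ring
  have hub : ∀ u ∈ Set.uIoc x t, ‖f' u - f' x‖ ≤ W * (1 + |t - x| / δ) := by
    intro u hu
    have hu' : u ∈ Set.uIcc x t := Set.uIoc_subset_uIcc hu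
    have huI : u ∈ Set.Icc (0:ℝ) 1 := hsub hu'
    have hux : |u - x| ≤ |t - x| := by
      rcases le_total x t with hxt | hxt
      · rw [Set.uIcc_of_le hxt] at hu'
        obtain ⟨h1, h2⟩ := hu'
        rw [abs_of_nonneg (by linarith), abs_of_nonneg (by linarith)]
        linarith
      · rw [Set.uIcc_of_ge hxt] at hu'
        obtain ⟨h1, h2⟩ := hu'
        rw [abs_of_nonpos (by linarith), abs_of_nonpos (by linarith)]
        linarith
    calc ‖f' u - f' x‖ ≤ W * (1 + |u - x| / δ) := w_chain hf' hδ huI hx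
      _ ≤ W * (1 + |t - x| / δ) := by
          apply mul_le_mul_of_nonneg_left _ hW0
          have : |u - x| / δ ≤ |t - x| / δ := by gcongr
          linarith
  have hnorm := intervalIntegral.norm_integral_le_of_norm_le_const hub
  rw [hrem] at hnorm
  calc |f t - f x - f' x * (t - x)| ≤ W * (1 + |t - x| / δ) * |t - x| := by
        simpa [Real.norm_eq_abs] using hnorm
    _ = W * (|t - x| + (t - x)^2 / δ) := by
        field_simp
        rw [← sq_abs (t-x)]
        ring

theorem G_first_derivative_estimate (f f' : ℝ → ℝ)
    (hf : ∀ y ∈ Set.Icc (0:ℝ) 1, HasDerivAt f (f' y) y)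
    (hf' : ContinuousOn f' (Set.Icc (0:ℝ) 1))
    (n : ℕ) (hn : 2 ≤ n) (α ρ : ℝ)
    (hα : α ∈ Set.Icc (0:ℝ) 1) (hρ : 0 < ρ) (x : ℝ) (hx : x ∈ Set.Icc (0:ℝ) 1) :
    (∀ δ : ℝ, 0 < δ →
      |G n α ρ f x - f x| ≤
        |f' x| * |1 - 2 * x| / ((n : ℝ) * ρ + 2) +
          (sSup {y : ℝ | ∃ u ∈ Set.Icc (0:ℝ) 1, ∃ v ∈ Set.Icc (0:ℝ) 1,
              |u - v| ≤ δ ∧ y = |f' u - f' v|}) *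
            (1 + Real.sqrt (G n α ρ (fun t => (t - x) ^ 2) x) / δ) *
            Real.sqrt (G n α ρ (fun t => (t - x) ^ 2) x)) ∧
    (0 < G n α ρ (fun t => (t - x) ^ 2) x →
      |G n α ρ f x - f x| ≤
        |f' x| * |1 - 2 * x| / ((n : ℝ) * ρ + 2) +
          2 * Real.sqrt (G n α ρ (fun t => (t - x) ^ 2) x) *
            sSup {y : ℝ | ∃ u ∈ Set.Icc (0:ℝ) 1, ∃ v ∈ Set.Icc (0:ℝ) 1,
              |u - v| ≤ Real.sqrt (G n α ρ (fun t => (t - x) ^ 2) x) ∧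
                y = |f' u - f' v|}) := by
  have hden : (0:ℝ) < (n:ℝ)*ρ + 2 := by positivity
  have hfc : ContinuousOn f (Set.Icc (0:ℝ) 1) :=
    fun y hy => ((hf y hy).continuousAt).continuousWithinAt
  set τ := G n α ρ (fun t => (t - x) ^ 2) x with hτdef
  have hψc : ContinuousOn (fun t : ℝ => (t - x)^2) (Set.Icc (0:ℝ) 1) :=
    (((continuous_id.sub continuous_const).pow 2)).continuousOn
  have hφc : ContinuousOn (fun t : ℝ => |t - x|) (Set.Icc (0:ℝ) 1) :=
    ((continuous_id.sub continuous_const).abs).continuousOn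
  have hτ0 : 0 ≤ τ := by
    rw [hτdef, ← G_const (n := n) (α := α) (ρ := ρ) (x := x) hn hρ (0:ℝ)]
    exact G_mono hn hρ hα hx continuous_const.continuousOn hψc
      (fun t _ => by positivity)
  set s := Real.sqrt τ with hsdef
  have hs0 : 0 ≤ s := Real.sqrt_nonneg τ
  have hss : s * s = τ := Real.mul_self_sqrt hτ0
  -- G applied to |t - x| is at most √τ
  have hGφ : G n α ρ (fun t => |t - x|) x ≤ s := by
    have key : ∀ ε : ℝ, 0 < ε → G n α ρ (fun t => |t - x|) x ≤ ε/2 + τ/(2*ε) := by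
      intro ε hε
      have pt : ∀ t ∈ Set.Icc (0:ℝ) 1, |t - x| ≤ ε/2 + (1/(2*ε)) * (t - x)^2 := by
        intro t _
        have h2 : 2*ε*|t - x| ≤ ε^2 + (t - x)^2 := by
          nlinarith [sq_abs (t - x), sq_nonneg (|t - x| - ε)]
        calc |t - x| = (2*ε*|t - x|)/(2*ε) := by field_simp
          _ ≤ (ε^2 + (t - x)^2)/(2*ε) := by gcongr
          _ = ε/2 + (1/(2*ε)) * (t - x)^2 := by field_simp
      have hbc : ContinuousOn (fun t : ℝ => ε/2 + (1/(2*ε)) * (t - x)^2) (Set.Icc (0:ℝ) 1) := by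
        fun_prop
      calc G n α ρ (fun t => |t - x|) x
          ≤ G n α ρ (fun t => ε/2 + (1/(2*ε)) * (t - x)^2) x :=
            G_mono hn hρ hα hx hφc hbc pt
        _ = ε/2 + (1/(2*ε)) * τ := by
            rw [G_add hn hρ
              (by fun_prop : ContinuousOn (fun _ : ℝ => ε/2) (Set.Icc (0:ℝ) 1))
              (by fun_prop :
                ContinuousOn (fun t : ℝ => (1/(2*ε)) * (t - x)^2) (Set.Icc (0:ℝ) 1)),
              G_const hn hρ, G_smul, ← hτdef]
        _ = ε/2 + τ/(2*ε) := by ring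
    rcases eq_or_lt_of_le hτ0 with heq | hpos
    · have h0 : G n α ρ (fun t => |t - x|) x ≤ 0 := by
        apply le_of_forall_pos_le_add
        intro ε hε
        have := key ε hε
        rw [← heq] at this
        simp only [zero_div] at this
        linarith
      linarith
    · have hspos : 0 < s := Real.sqrt_pos.mpr hpos
      calc G n α ρ (fun t => |t - x|) x ≤ s/2 + τ/(2*s) := key s hspos
        _ = s := by
            rw [← hss]
            field_simp
            ring
  -- decomposition
  set R : ℝ → ℝ := fun t => f t - f x - f' x * (t - x) with hRdef
  have hRc : ContinuousOn R (Set.Icc (0:ℝ) 1) :=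
    (hfc.sub continuousOn_const).sub
      ((continuous_const.mul (continuous_id.sub continuous_const)).continuousOn)
  have hdecomp : G n α ρ f x - f x = f' x * ((1 - 2*x)/((n:ℝ)*ρ + 2)) + G n α ρ R x := by
    have hfeq : f = fun t => (fun t => f x + f' x * (t - x)) t + R t := by
      funext t
      simp only [hRdef]
      ring
    have h1 : G n α ρ f x
        = G n α ρ (fun t => f x + f' x * (t - x)) x + G n α ρ R x := by
      conv_lhs => rw [hfeq]
      exact G_add hn hρ
        (by fun_prop : ContinuousOn (fun t : ℝ => f x + f' x * (t - x)) (Set.Icc (0:ℝ) 1)) hRc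
    have h2 : G n α ρ (fun t => f x + f' x * (t - x)) x
        = f x + f' x * ((1 - 2*x)/((n:ℝ)*ρ + 2)) := by
      rw [G_add hn hρ
        (by fun_prop : ContinuousOn (fun _ : ℝ => f x) (Set.Icc (0:ℝ) 1))
        (by fun_prop : ContinuousOn (fun t : ℝ => f' x * (t - x)) (Set.Icc (0:ℝ) 1)),
        G_const hn hρ, G_smul, G_lin hn hρ]
    rw [h1, h2]
    ring
  -- the main estimate
  have main : ∀ δ : ℝ, 0 < δ →
      |G n α ρ f x - f x| ≤
        |f' x| * |1 - 2 * x| / ((n : ℝ) * ρ + 2) +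
          (sSup {y : ℝ | ∃ u ∈ Set.Icc (0:ℝ) 1, ∃ v ∈ Set.Icc (0:ℝ) 1,
              |u - v| ≤ δ ∧ y = |f' u - f' v|}) * (1 + s / δ) * s := by
    intro δ hδ
    set W := sSup {y : ℝ | ∃ u ∈ Set.Icc (0:ℝ) 1, ∃ v ∈ Set.Icc (0:ℝ) 1,
      |u - v| ≤ δ ∧ y = |f' u - f' v|} with hWdef
    have hW0 : 0 ≤ W := w_nonneg hf' hδ.le
    have habs : |G n α ρ R x| ≤ W * (G n α ρ (fun t => |t - x|) x + τ/δ) := by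
      have step1 : |G n α ρ R x| ≤ G n α ρ (fun t => |R t|) x := G_abs hn hρ hα hx hRc
      have step2 : G n α ρ (fun t => |R t|) x
          ≤ G n α ρ (fun t => W * (|t - x| + (1/δ) * (t - x)^2)) x := by
        apply G_mono hn hρ hα hx hRc.abs
          (by fun_prop : ContinuousOn
            (fun t : ℝ => W * (|t - x| + (1/δ) * (t - x)^2)) (Set.Icc (0:ℝ) 1))
        intro t ht
        have := taylor_bound hf hf' hx ht hδ
        calc |R t| ≤ W * (|t - x| + (t - x)^2 / δ) := this
          _ = W * (|t - x| + (1/δ) * (t - x)^2) := by ring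
      have step3 : G n α ρ (fun t => W * (|t - x| + (1/δ) * (t - x)^2)) x
          = W * (G n α ρ (fun t => |t - x|) x + (1/δ) * τ) := by
        rw [G_smul, G_add hn hρ hφc
          (by fun_prop : ContinuousOn (fun t : ℝ => (1/δ) * (t - x)^2) (Set.Icc (0:ℝ) 1)),
          G_smul, ← hτdef]
      calc |G n α ρ R x| ≤ G n α ρ (fun t => |R t|) x := step1
        _ ≤ G n α ρ (fun t => W * (|t - x| + (1/δ) * (t - x)^2)) x := step2
        _ = W * (G n α ρ (fun t => |t - x|) x + (1/δ) * τ) := step3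
        _ = W * (G n α ρ (fun t => |t - x|) x + τ/δ) := by ring
    calc |G n α ρ f x - f x|
        = |f' x * ((1 - 2*x)/((n:ℝ)*ρ + 2)) + G n α ρ R x| := by rw [hdecomp]
      _ ≤ |f' x * ((1 - 2*x)/((n:ℝ)*ρ + 2))| + |G n α ρ R x| := abs_add_le _ _
      _ = |f' x| * |1 - 2*x| / ((n:ℝ)*ρ + 2) + |G n α ρ R x| := by
          rw [abs_mul, abs_div, abs_of_pos hden]
          ring
      _ ≤ |f' x| * |1 - 2*x| / ((n:ℝ)*ρ + 2) + W * (G n α ρ (fun t => |t - x|) x + τ/δ) := by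
          linarith
      _ ≤ |f' x| * |1 - 2*x| / ((n:ℝ)*ρ + 2) + W * (s + τ/δ) := by
          have : W * (G n α ρ (fun t => |t - x|) x + τ/δ) ≤ W * (s + τ/δ) := by
            apply mul_le_mul_of_nonneg_left _ hW0
            linarith
          linarith
      _ = |f' x| * |1 - 2*x| / ((n:ℝ)*ρ + 2) + W * (1 + s / δ) * s := by
          rw [show W * (s + τ/δ) = W * (1 + s / δ) * s by
            rw [← hss]; field_simp]
  constructor
  · exact main
  · intro hτpos
    have hspos : 0 < s := Real.sqrt_pos.mpr hτpos
    have := main s hspos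
    calc |G n α ρ f x - f x|
        ≤ |f' x| * |1 - 2 * x| / ((n : ℝ) * ρ + 2) +
          (sSup {y : ℝ | ∃ u ∈ Set.Icc (0:ℝ) 1, ∃ v ∈ Set.Icc (0:ℝ) 1,
              |u - v| ≤ s ∧ y = |f' u - f' v|}) * (1 + s / s) * s := this
      _ = |f' x| * |1 - 2 * x| / ((n : ℝ) * ρ + 2) +
          2 * s * sSup {y : ℝ | ∃ u ∈ Set.Icc (0:ℝ) 1, ∃ v ∈ Set.Icc (0:ℝ) 1,
              |u - v| ≤ s ∧ y = |f' u - f' v|} := by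
          rw [div_self hspos.ne']
          ring
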